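/- Let 𝔞 be a small pre-additive category, f : 𝔟 ⊇ 𝔞 a full subcategory inclusion, and P a left 𝔟-module that is a direct summand of a finite direct sum ⊕_{i=1}^n 𝔟(B_i, -) with each B_i in the essential image of f. Then the canonical map 𝔟 ⊗_𝔞 (P restricted to 𝔞) → P is an isomorphism. -/

import Mathlib

open CategoryTheory Limits Opposite

universe u

set_option linter.unusedSectionVars false
section
variable {𝔞 𝔟 : Type u} [SmallCategory 𝔞] [SmallCategory 𝔟]
  [Preadditive 𝔞] [Preadditive 𝔟]
  (F : 𝔞 ⥤ 𝔟) [F.Full] [F.Faithful]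

lemma wl_sum {P N : 𝔟 ⥤ AddCommGrpCat.{u}} {ι : Type} (t : Finset ι) (f : ι → (P ⟶ N)) :
    Functor.whiskerLeft F (∑ i ∈ t, f i) = ∑ i ∈ t, Functor.whiskerLeft F (f i) := by
  ext a : 2
  simp [NatTrans.app_sum]

lemma rep_inj (X : 𝔞) (N : 𝔟 ⥤ AddCommGrpCat.{u})
    {φ φ' : preadditiveCoyoneda.obj (op (F.obj X)) ⟶ N}
    (h : Functor.whiskerLeft F φ = Functor.whiskerLeft F φ') : φ = φ' := by
  have hX : φ.app (F.obj X) = φ'.app (F.obj X) := by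
    have := congrArg (fun t => NatTrans.app t X) h
    simpa using this
  ext c g
  have h1 := NatTrans.naturality_apply φ g (𝟙 (F.obj X))
  have h2 := NatTrans.naturality_apply φ' g (𝟙 (F.obj X))
  have key : ((preadditiveCoyoneda.obj (op (F.obj X))).map g) (𝟙 (F.obj X)) = g :=
    Category.id_comp g
  rw [key] at h1 h2
  rw [h1, h2, hX]

lemma rep_surj (X : 𝔞) (N : 𝔟 ⥤ AddCommGrpCat.{u}) [N.Additive]
    (ψ : F ⋙ preadditiveCoyoneda.obj (op (F.obj X)) ⟶ F ⋙ N) :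
    ∃ φ : preadditiveCoyoneda.obj (op (F.obj X)) ⟶ N, Functor.whiskerLeft F φ = ψ := by
  set x : N.obj (F.obj X) := ψ.app X (𝟙 (F.obj X)) with hx
  let φapp : ∀ c : 𝔟, (preadditiveCoyoneda.obj (op (F.obj X))).obj c ⟶ N.obj c := fun c =>
    AddCommGrpCat.ofHom
      { toFun := fun g => N.map g x
        map_zero' := by show N.map 0 x = 0; rw [N.map_zero]; rfl
        map_add' := fun g g' => by show N.map (g + g') x = N.map g x + N.map g' x; rw [show N.map (g + g') = N.map g + N.map g' from N.map_add]; rfl }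
  refine ⟨⟨φapp, fun c c' h => ?_⟩, ?_⟩
  · ext g
    show N.map (g ≫ h) x = N.map h (N.map g x)
    rw [show N.map (g ≫ h) = N.map g ≫ N.map h from N.map_comp g h]; rfl
  ext a : 2
  ext g
  show N.map g x = ψ.app a g
  obtain ⟨h, rfl⟩ := F.map_surjective g
  have nat := NatTrans.naturality_apply ψ h (𝟙 (F.obj X))
  have key : ((F ⋙ preadditiveCoyoneda.obj (op (F.obj X))).map h) (𝟙 (F.obj X)) = F.map h :=
    Category.id_comp _
  rw [key] at nat
  rw [nat]
  rfl
end

/-- Let `F : 𝔞 ⥤ 𝔟` be a fully faithful additive functor between small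
preadditive categories, and let `P` be a `𝔟`-module which is a direct summand of a
finite direct sum `⨁ 𝔟(F Bᵢ, −)` of representables at objects in the image of `F`.
Then the canonical map `𝔟 ⊗_𝔞 P|_𝔞 → P` is an isomorphism; equivalently (by
adjunction), for every `𝔟`-module `N` the restriction map
`Hom(P, N) → Hom(P|_𝔞, N|_𝔞)` is bijective. -/
theorem stmt5 {𝔞 𝔟 : Type u} [SmallCategory 𝔞] [SmallCategory 𝔟]
    [Preadditive 𝔞] [Preadditive 𝔟]
    (F : 𝔞 ⥤ 𝔟) [F.Full] [F.Faithful] [F.Additive]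
    [HasFiniteBiproducts (𝔟 ⥤ AddCommGrpCat.{u})]
    (P : 𝔟 ⥤ AddCommGrpCat.{u}) [P.Additive]
    (n : ℕ) (B : Fin n → 𝔞)
    (s : P ⟶ ⨁ fun i => preadditiveCoyoneda.obj (op (F.obj (B i))))
    (r : (⨁ fun i => preadditiveCoyoneda.obj (op (F.obj (B i)))) ⟶ P)
    (hsr : s ≫ r = 𝟙 P)
    (N : 𝔟 ⥤ AddCommGrpCat.{u}) [N.Additive] :
    Function.Bijective (fun φ : P ⟶ N => CategoryTheory.Functor.whiskerLeft F φ) := by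
  constructor
  · intro φ φ' h
    dsimp only at h
    have hrφ : r ≫ φ = r ≫ φ' := by
      apply biproduct.hom_ext'
      intro i
      apply rep_inj F (B i) N
      simp only [← Category.assoc, Functor.whiskerLeft_comp]
      rw [h]
    calc φ = (s ≫ r) ≫ φ := by rw [hsr, Category.id_comp]
    _ = s ≫ r ≫ φ' := by rw [Category.assoc, hrφ]
    _ = φ' := by rw [← Category.assoc, hsr, Category.id_comp]
  · intro ψ
    choose χ hχ using fun i => rep_surj F (B i) N
      (Functor.whiskerLeft F (biproduct.ι (fun i => preadditiveCoyoneda.obj (op (F.obj (B i)))) i ≫ r) ≫ ψ)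
    refine ⟨s ≫ biproduct.desc χ, ?_⟩
    dsimp only
    have hdesc : biproduct.desc χ =
        ∑ i, biproduct.π (fun i => preadditiveCoyoneda.obj (op (F.obj (B i)))) i ≫ χ i := by
      rw [← Category.id_comp (biproduct.desc χ), ← biproduct.total, Preadditive.sum_comp]
      simp
    rw [Functor.whiskerLeft_comp, hdesc, wl_sum]
    have step : ∀ i, Functor.whiskerLeft F (biproduct.π (fun i => preadditiveCoyoneda.obj (op (F.obj (B i)))) i ≫ χ i)
        = Functor.whiskerLeft F ((biproduct.π (fun i => preadditiveCoyoneda.obj (op (F.obj (B i)))) i ≫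
            biproduct.ι (fun i => preadditiveCoyoneda.obj (op (F.obj (B i)))) i) ≫ r) ≫ ψ := by
      intro i
      rw [Functor.whiskerLeft_comp, hχ]
      simp only [Functor.whiskerLeft_comp, Category.assoc]
    rw [Finset.sum_congr rfl (fun i _ => step i), ← Preadditive.sum_comp, ← wl_sum,
      ← Preadditive.sum_comp, biproduct.total, Category.id_comp, ← Category.assoc,
      ← Functor.whiskerLeft_comp, hsr]
    simp
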